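/- Let p ≥ 0 and let (X,d) be a metric space. Then (X,d) has strict p-negative type if and only if (X,d) has strict generalized roundness p. -/

import Mathlib

open scoped BigOperators

/-- The kernel `d(x,y)^p`, with the convention that it vanishes on the diagonal
(this matters only when `p = 0`). -/
noncomputable def negKer {X : Type*} [MetricSpace X] (p : ℝ) (x y : X) : ℝ :=
  @ite ℝ (x = y) (Classical.dec _) 0 (dist x y ^ p)

/-- `(X,d)` has `p`-negative type: for all `k ≥ 2`, pairwise distinct points
`x₁,…,x_k` and reals `η₁,…,η_k` summing to zero,
`∑_{i,j} d(xᵢ,xⱼ)^p ηᵢ ηⱼ ≤ 0`. -/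
def HasNegType (X : Type*) [MetricSpace X] (p : ℝ) : Prop :=
  ∀ (k : ℕ), 2 ≤ k → ∀ (x : Fin k → X), Function.Injective x →
    ∀ (η : Fin k → ℝ), (∑ i, η i) = 0 →
      (∑ i, ∑ j, negKer p (x i) (x j) * η i * η j) ≤ 0

/-- `(X,d)` has strict `p`-negative type: `p`-negative type, with strict
inequality whenever `η ≠ 0`. -/
def HasStrictNegType (X : Type*) [MetricSpace X] (p : ℝ) : Prop :=
  HasNegType X p ∧
  ∀ (k : ℕ), 2 ≤ k → ∀ (x : Fin k → X), Function.Injective x →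
    ∀ (η : Fin k → ℝ), (∑ i, η i) = 0 → η ≠ 0 →
      (∑ i, ∑ j, negKer p (x i) (x j) * η i * η j) < 0

/-- A normalized `(s,t)`-simplex in `X`: `s+t` pairwise distinct points
`a₁,…,a_s,b₁,…,b_t` with positive weights `m`, `n`, each family summing to `1`. -/
structure IsNormSimplex {X : Type*} [MetricSpace X] {s t : ℕ}
    (a : Fin s → X) (b : Fin t → X) (m : Fin s → ℝ) (n : Fin t → ℝ) : Prop where
  inj_a : Function.Injective a
  inj_b : Function.Injective b
  disj : ∀ j i, a j ≠ b i
  m_pos : ∀ j, 0 < m j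
  n_pos : ∀ i, 0 < n i
  m_sum : (∑ j, m j) = 1
  n_sum : (∑ i, n i) = 1

/-- The `p`-negative type simplex gap `γ_D^p(ω)` of a loaded `(s,t)`-simplex. -/
noncomputable def simplexGap {X : Type*} [MetricSpace X] (p : ℝ) {s t : ℕ}
    (a : Fin s → X) (b : Fin t → X) (m : Fin s → ℝ) (n : Fin t → ℝ) : ℝ :=
  (∑ j, ∑ i, m j * n i * dist (a j) (b i) ^ p)
    - (∑ j₁, ∑ j₂, if j₁ < j₂ then m j₁ * m j₂ * dist (a j₁) (a j₂) ^ p else 0)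
    - (∑ i₁, ∑ i₂, if i₁ < i₂ then n i₁ * n i₂ * dist (b i₁) (b i₂) ^ p else 0)

/-- `(X,d)` has generalized roundness `p`. -/
def HasGenRoundness (X : Type*) [MetricSpace X] (p : ℝ) : Prop :=
  ∀ (s t : ℕ) (a : Fin s → X) (b : Fin t → X) (m : Fin s → ℝ) (n : Fin t → ℝ),
    IsNormSimplex a b m n → 0 ≤ simplexGap p a b m n

/-- `(X,d)` has strict generalized roundness `p`. -/
def HasStrictGenRoundness (X : Type*) [MetricSpace X] (p : ℝ) : Prop :=
  ∀ (s t : ℕ) (a : Fin s → X) (b : Fin t → X) (m : Fin s → ℝ) (n : Fin t → ℝ),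
    IsNormSimplex a b m n → 0 < simplexGap p a b m n

section Aux

variable {X : Type*} [MetricSpace X] {p : ℝ}

lemma negKer_self (p : ℝ) (x : X) : negKer p x x = 0 := if_pos rfl

lemma negKer_of_ne {x y : X} (h : x ≠ y) : negKer p x y = dist x y ^ p := if_neg h

lemma negKer_comm (p : ℝ) (x y : X) : negKer p x y = negKer p y x := by
  unfold negKer
  rcases eq_or_ne x y with h | h
  · subst h; rfl
  · rw [if_neg h, if_neg (Ne.symm h), dist_comm]

/-- In a symmetric, zero-diagonal double sum, the full sum is twice the
strictly-upper-triangular part. -/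
lemma offdiag_double {r : ℕ} (g : Fin r → Fin r → ℝ) (h0 : ∀ i, g i i = 0)
    (hs : ∀ i j, g i j = g j i) :
    ∑ i, ∑ j, g i j = 2 * ∑ i, ∑ j, (if i < j then g i j else 0) := by
  have key : ∀ i j : Fin r, g i j =
      (if i < j then g i j else 0) + (if j < i then g i j else 0) := by
    intro i j
    rcases lt_trichotomy i j with h | h | h
    · simp [h, asymm h]
    · subst h; simp [h0]
    · simp [h, asymm h]
  have h1 : ∑ i, ∑ j, g i j =
      (∑ i, ∑ j, (if i < j then g i j else 0)) +
        ∑ i, ∑ j, (if j < i then g i j else 0) := by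
    rw [← Finset.sum_add_distrib]
    refine Finset.sum_congr rfl fun i _ => ?_
    rw [← Finset.sum_add_distrib]
    exact Finset.sum_congr rfl fun j _ => key i j
  have h2 : ∑ i, ∑ j, (if j < i then g i j else 0)
      = ∑ i, ∑ j, (if i < j then g i j else 0) := by
    rw [Finset.sum_comm]
    refine Finset.sum_congr rfl fun i _ => Finset.sum_congr rfl fun j _ => ?_
    by_cases h : i < j <;> simp [h, hs i j]
  rw [h1, h2]; ring

/-- The simplex gap rewritten in terms of full `negKer` double sums. -/
lemma gap_eq {s t : ℕ} {a : Fin s → X} {b : Fin t → X} {m : Fin s → ℝ}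
    {n : Fin t → ℝ} (h : IsNormSimplex a b m n) :
    simplexGap p a b m n =
      (∑ j, ∑ i, m j * n i * negKer p (a j) (b i))
        - (1/2) * (∑ j₁, ∑ j₂, m j₁ * m j₂ * negKer p (a j₁) (a j₂))
        - (1/2) * (∑ i₁, ∑ i₂, n i₁ * n i₂ * negKer p (b i₁) (b i₂)) := by
  have hA : ∑ j₁, ∑ j₂, m j₁ * m j₂ * negKer p (a j₁) (a j₂)
      = 2 * ∑ j₁, ∑ j₂, (if j₁ < j₂ then m j₁ * m j₂ * dist (a j₁) (a j₂) ^ p else 0) := by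
    rw [offdiag_double (fun j₁ j₂ => m j₁ * m j₂ * negKer p (a j₁) (a j₂))
      (fun i => by simp [negKer_self])
      (fun i j => by rw [negKer_comm]; ring)]
    congr 1
    refine Finset.sum_congr rfl fun j₁ _ => Finset.sum_congr rfl fun j₂ _ => ?_
    by_cases hlt : j₁ < j₂
    · rw [if_pos hlt, if_pos hlt, negKer_of_ne (fun hh => hlt.ne (h.inj_a hh))]
    · rw [if_neg hlt, if_neg hlt]
  have hB : ∑ i₁, ∑ i₂, n i₁ * n i₂ * negKer p (b i₁) (b i₂)
      = 2 * ∑ i₁, ∑ i₂, (if i₁ < i₂ then n i₁ * n i₂ * dist (b i₁) (b i₂) ^ p else 0) := by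
    rw [offdiag_double (fun i₁ i₂ => n i₁ * n i₂ * negKer p (b i₁) (b i₂))
      (fun i => by simp [negKer_self])
      (fun i j => by rw [negKer_comm]; ring)]
    congr 1
    refine Finset.sum_congr rfl fun i₁ _ => Finset.sum_congr rfl fun i₂ _ => ?_
    by_cases hlt : i₁ < i₂
    · rw [if_pos hlt, if_pos hlt, negKer_of_ne (fun hh => hlt.ne (h.inj_b hh))]
    · rw [if_neg hlt, if_neg hlt]
  have hC : (∑ j, ∑ i, m j * n i * negKer p (a j) (b i))
      = ∑ j, ∑ i, m j * n i * dist (a j) (b i) ^ p := by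
    refine Finset.sum_congr rfl fun j _ => Finset.sum_congr rfl fun i _ => ?_
    rw [negKer_of_ne (h.disj j i)]
  unfold simplexGap
  rw [hA, hB, hC]; ring

/-- Pulling a `Finset` sum back along `Finset.equivFin`. -/
lemma sum_equivFin {ι : Type*} (P : Finset ι) (f : ι → ℝ) :
    ∑ j : Fin P.card, f ((P.equivFin.symm j : P) : ι) = ∑ i ∈ P, f i := by
  rw [← Finset.sum_coe_sort P f, ← Equiv.sum_comp P.equivFin.symm (fun i : P => f i)]

lemma sum_equivFin₂ {ι : Type*} (P Q : Finset ι) (g : ι → ι → ℝ) :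
    ∑ j₁ : Fin P.card, ∑ j₂ : Fin Q.card,
        g ((P.equivFin.symm j₁ : P) : ι) ((Q.equivFin.symm j₂ : Q) : ι)
      = ∑ i₁ ∈ P, ∑ i₂ ∈ Q, g i₁ i₂ := by
  rw [← sum_equivFin P (fun i₁ => ∑ i₂ ∈ Q, g i₁ i₂)]
  exact Finset.sum_congr rfl fun j₁ _ => sum_equivFin Q _

end Aux
section Dir1
variable {X : Type*} [MetricSpace X] {p : ℝ}

lemma quad_concat {s t : ℕ}
    {a : Fin s → X} {b : Fin t → X} {m : Fin s → ℝ} {n : Fin t → ℝ}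
    (h : IsNormSimplex a b m n) :
    (∑ i, ∑ j,
        negKer p (Sum.elim a b (finSumFinEquiv.symm i))
            (Sum.elim a b (finSumFinEquiv.symm j))
          * Sum.elim m (fun i => -n i) (finSumFinEquiv.symm i)
          * Sum.elim m (fun i => -n i) (finSumFinEquiv.symm j))
      = -2 * simplexGap p a b m n := by
  have e1 : (∑ i, ∑ j,
        negKer p (Sum.elim a b (finSumFinEquiv.symm i))
            (Sum.elim a b (finSumFinEquiv.symm j))
          * Sum.elim m (fun i => -n i) (finSumFinEquiv.symm i)
          * Sum.elim m (fun i => -n i) (finSumFinEquiv.symm j))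
      = ∑ y : Fin s ⊕ Fin t, ∑ z : Fin s ⊕ Fin t,
          negKer p (Sum.elim a b y) (Sum.elim a b z)
            * Sum.elim m (fun i => -n i) y * Sum.elim m (fun i => -n i) z := by
    rw [Equiv.sum_comp (finSumFinEquiv (m := s) (n := t)).symm
      (fun y => ∑ j, negKer p (Sum.elim a b y) (Sum.elim a b (finSumFinEquiv.symm j))
          * Sum.elim m (fun i => -n i) y * Sum.elim m (fun i => -n i) (finSumFinEquiv.symm j))]
    refine Finset.sum_congr rfl fun y _ => ?_
    exact Equiv.sum_comp (finSumFinEquiv (m := s) (n := t)).symm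
      (fun z => negKer p (Sum.elim a b y) (Sum.elim a b z)
          * Sum.elim m (fun i => -n i) y * Sum.elim m (fun i => -n i) z)
  rw [e1]
  simp only [Fintype.sum_sum_type, Sum.elim_inl, Sum.elim_inr, Finset.sum_add_distrib]
  have h1 : ∑ x : Fin s, ∑ y : Fin s, negKer p (a x) (a y) * m x * m y
      = ∑ j₁, ∑ j₂, m j₁ * m j₂ * negKer p (a j₁) (a j₂) :=
    Finset.sum_congr rfl fun x _ => Finset.sum_congr rfl fun y _ => by ring
  have h2 : ∑ x : Fin t, ∑ y : Fin s, negKer p (b x) (a y) * -n x * m y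
      = -∑ j, ∑ i, m j * n i * negKer p (a j) (b i) := by
    rw [Finset.sum_comm, ← Finset.sum_neg_distrib]
    refine Finset.sum_congr rfl fun x _ => ?_
    rw [← Finset.sum_neg_distrib]
    refine Finset.sum_congr rfl fun y _ => ?_
    rw [negKer_comm]; ring
  have h3 : ∑ x : Fin s, ∑ y : Fin t, negKer p (a x) (b y) * m x * -n y
      = -∑ j, ∑ i, m j * n i * negKer p (a j) (b i) := by
    rw [← Finset.sum_neg_distrib]
    refine Finset.sum_congr rfl fun x _ => ?_
    rw [← Finset.sum_neg_distrib]
    exact Finset.sum_congr rfl fun y _ => by ring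
  have h4 : ∑ x : Fin t, ∑ y : Fin t, negKer p (b x) (b y) * -n x * -n y
      = ∑ i₁, ∑ i₂, n i₁ * n i₂ * negKer p (b i₁) (b i₂) :=
    Finset.sum_congr rfl fun x _ => Finset.sum_congr rfl fun y _ => by ring
  rw [h1, h2, h3, h4, gap_eq h]
  ring

lemma strict_neg_to_gen (h : HasStrictNegType X p) : HasStrictGenRoundness X p := by
  intro s t a b m n hsim
  have hs : s ≠ 0 := by
    rintro rfl
    have := hsim.m_sum
    simp at this
  have ht : t ≠ 0 := by
    rintro rfl
    have := hsim.n_sum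
    simp at this
  have hk : 2 ≤ s + t := by omega
  set x : Fin (s + t) → X := fun i => Sum.elim a b (finSumFinEquiv.symm i) with hxdef
  set η : Fin (s + t) → ℝ := fun i => Sum.elim m (fun i => -n i) (finSumFinEquiv.symm i)
    with hηdef
  have hxinj : Function.Injective x := by
    intro u v huv
    apply finSumFinEquiv.symm.injective
    have huv' : Sum.elim a b (finSumFinEquiv.symm u) = Sum.elim a b (finSumFinEquiv.symm v) := huv
    rcases hu : finSumFinEquiv.symm u with u' | u' <;> rcases hv : finSumFinEquiv.symm v with v' | v' <;>
      rw [hu, hv] at huv' <;> simp only [Sum.elim_inl, Sum.elim_inr] at huv'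
    · rw [hsim.inj_a huv']
    · exact absurd huv' (hsim.disj u' v')
    · exact absurd huv'.symm (hsim.disj v' u')
    · rw [hsim.inj_b huv']
  have hηsum : (∑ i, η i) = 0 := by
    rw [hηdef, Equiv.sum_comp (finSumFinEquiv (m := s) (n := t)).symm
      (Sum.elim m (fun i => -n i))]
    rw [Fintype.sum_sum_type]
    simp only [Sum.elim_inl, Sum.elim_inr, Finset.sum_neg_distrib]
    rw [hsim.m_sum, hsim.n_sum]; ring
  have hηne : η ≠ 0 := by
    intro h0
    have h1 : η (finSumFinEquiv (Sum.inl ⟨0, Nat.pos_of_ne_zero hs⟩)) = 0 := by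
      rw [h0]; rfl
    rw [hηdef] at h1
    simp only [Equiv.symm_apply_apply, Sum.elim_inl] at h1
    exact (hsim.m_pos _).ne' h1
  have hlt := h.2 (s + t) hk x hxinj η hηsum hηne
  have heq : (∑ i, ∑ j, negKer p (x i) (x j) * η i * η j)
      = -2 * simplexGap p a b m n := quad_concat hsim
  rw [heq] at hlt
  linarith

end Dir1
section Dir2
variable {X : Type*} [MetricSpace X] {p : ℝ}

lemma gen_to_strict_sum (h : HasStrictGenRoundness X p) {k : ℕ}
    (x : Fin k → X) (hx : Function.Injective x) (η : Fin k → ℝ)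
    (hsum : (∑ i, η i) = 0) (hne : η ≠ 0) :
    (∑ i, ∑ j, negKer p (x i) (x j) * η i * η j) < 0 := by
  classical
  set P : Finset (Fin k) := Finset.univ.filter (fun i => 0 < η i) with hP
  set N : Finset (Fin k) := Finset.univ.filter (fun i => η i < 0) with hN
  have hPN : Disjoint P N := by
    rw [Finset.disjoint_left]
    intro i hiP hiN
    rw [hP, Finset.mem_filter] at hiP
    rw [hN, Finset.mem_filter] at hiN
    linarith [hiP.2, hiN.2]
  have hmemP : ∀ i ∈ P, 0 < η i := fun i hi => (Finset.mem_filter.1 hi).2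
  have hmemN : ∀ i ∈ N, η i < 0 := fun i hi => (Finset.mem_filter.1 hi).2
  have hη0 : ∀ i ∈ Finset.univ, i ∉ P ∪ N → η i = 0 := by
    intro i _ hi
    rw [Finset.mem_union] at hi
    push_neg at hi
    have h1 : ¬ 0 < η i := fun hc => hi.1 (by rw [hP]; simp [hc])
    have h2 : ¬ η i < 0 := fun hc => hi.2 (by rw [hN]; simp [hc])
    linarith
  have hsplit : ∑ i ∈ P, η i + ∑ i ∈ N, η i = 0 := by
    rw [← Finset.sum_union hPN, Finset.sum_subset (Finset.subset_univ _) hη0, hsum]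
  obtain ⟨i0, hi0⟩ : ∃ i, η i ≠ 0 := Function.ne_iff.1 hne
  have hPne : P.Nonempty := by
    rcases lt_trichotomy (η i0) 0 with h1 | h1 | h1
    · by_contra hPe
      rw [Finset.not_nonempty_iff_eq_empty] at hPe
      have hNne : N.Nonempty := ⟨i0, by rw [hN]; simp [h1]⟩
      have hneg : ∑ i ∈ N, η i < 0 := Finset.sum_neg hmemN hNne
      rw [hPe] at hsplit
      simp at hsplit
      linarith
    · exact absurd h1 hi0
    · exact ⟨i0, by rw [hP]; simp [h1]⟩
  have hNne : N.Nonempty := by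
    by_contra hNe
    rw [Finset.not_nonempty_iff_eq_empty] at hNe
    have hpos : 0 < ∑ i ∈ P, η i := Finset.sum_pos hmemP hPne
    rw [hNe] at hsplit
    simp at hsplit
    linarith
  set M : ℝ := ∑ i ∈ P, η i with hM
  have hMpos : 0 < M := Finset.sum_pos hmemP hPne
  have hMne : M ≠ 0 := hMpos.ne'
  have hNsum : ∑ i ∈ N, η i = -M := by rw [hM] at hsplit ⊢; linarith
  set a : Fin P.card → X := fun j => x ((P.equivFin.symm j : P) : Fin k) with ha
  set b : Fin N.card → X := fun i => x ((N.equivFin.symm i : N) : Fin k) with hb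
  set m : Fin P.card → ℝ := fun j => η ((P.equivFin.symm j : P) : Fin k) / M with hm
  set n : Fin N.card → ℝ := fun i => -η ((N.equivFin.symm i : N) : Fin k) / M with hn
  have hsimp : IsNormSimplex a b m n := by
    constructor
    · intro j1 j2 hj
      exact P.equivFin.symm.injective (Subtype.coe_injective (hx hj))
    · intro j1 j2 hj
      exact N.equivFin.symm.injective (Subtype.coe_injective (hx hj))
    · intro j i hij
      have h1 : ((P.equivFin.symm j : P) : Fin k) = ((N.equivFin.symm i : N) : Fin k) :=
        hx hij
      have h2 : ((P.equivFin.symm j : P) : Fin k) ∈ P := (P.equivFin.symm j).2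
      have h3 : ((N.equivFin.symm i : N) : Fin k) ∈ N := (N.equivFin.symm i).2
      rw [h1] at h2
      exact Finset.disjoint_left.1 hPN h2 h3
    · intro j
      exact div_pos (hmemP _ (P.equivFin.symm j).2) hMpos
    · intro i
      exact div_pos (neg_pos.2 (hmemN _ (N.equivFin.symm i).2)) hMpos
    · rw [hm, ← Finset.sum_div, sum_equivFin P η, ← hM, div_self hMne]
    · rw [hn, ← Finset.sum_div, sum_equivFin N (fun i => -η i),
        Finset.sum_neg_distrib, hNsum, neg_neg, div_self hMne]
  have hgap := h P.card N.card a b m n hsimp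
  rw [gap_eq hsimp] at hgap
  -- restrict the big sum to P ∪ N
  have step1 : (∑ i, ∑ j, negKer p (x i) (x j) * η i * η j)
      = ∑ i ∈ P ∪ N, ∑ j ∈ P ∪ N, negKer p (x i) (x j) * η i * η j := by
    rw [← Finset.sum_subset (Finset.subset_univ (P ∪ N))
      (fun i hi hi' => Finset.sum_eq_zero fun j _ => by rw [hη0 i hi hi']; ring)]
    refine Finset.sum_congr rfl fun i _ => ?_
    rw [← Finset.sum_subset (Finset.subset_univ (P ∪ N))
      (fun j hj hj' => by rw [hη0 j hj hj']; ring)]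
  have hPP : ∑ i ∈ P, ∑ j ∈ P, negKer p (x i) (x j) * η i * η j
      = M ^ 2 * ∑ j₁, ∑ j₂, m j₁ * m j₂ * negKer p (a j₁) (a j₂) := by
    rw [← sum_equivFin₂ P P (fun i₁ i₂ => negKer p (x i₁) (x i₂) * η i₁ * η i₂),
      Finset.mul_sum]
    refine Finset.sum_congr rfl fun j₁ _ => ?_
    rw [Finset.mul_sum]
    refine Finset.sum_congr rfl fun j₂ _ => ?_
    rw [hm, ha]
    dsimp only
    field_simp
  have hNN : ∑ i ∈ N, ∑ j ∈ N, negKer p (x i) (x j) * η i * η j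
      = M ^ 2 * ∑ i₁, ∑ i₂, n i₁ * n i₂ * negKer p (b i₁) (b i₂) := by
    rw [← sum_equivFin₂ N N (fun i₁ i₂ => negKer p (x i₁) (x i₂) * η i₁ * η i₂),
      Finset.mul_sum]
    refine Finset.sum_congr rfl fun i₁ _ => ?_
    rw [Finset.mul_sum]
    refine Finset.sum_congr rfl fun i₂ _ => ?_
    rw [hn, hb]
    dsimp only
    field_simp
  have hPNb : ∑ i ∈ P, ∑ j ∈ N, negKer p (x i) (x j) * η i * η j
      = -(M ^ 2 * ∑ j₁, ∑ i₂, m j₁ * n i₂ * negKer p (a j₁) (b i₂)) := by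
    rw [← sum_equivFin₂ P N (fun i₁ i₂ => negKer p (x i₁) (x i₂) * η i₁ * η i₂),
      Finset.mul_sum, ← Finset.sum_neg_distrib]
    refine Finset.sum_congr rfl fun j₁ _ => ?_
    rw [Finset.mul_sum, ← Finset.sum_neg_distrib]
    refine Finset.sum_congr rfl fun i₂ _ => ?_
    rw [hm, hn, ha, hb]
    dsimp only
    field_simp
  have hNPb : ∑ i ∈ N, ∑ j ∈ P, negKer p (x i) (x j) * η i * η j
      = -(M ^ 2 * ∑ j₁, ∑ i₂, m j₁ * n i₂ * negKer p (a j₁) (b i₂)) := by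
    rw [Finset.sum_comm, ← hPNb]
    refine Finset.sum_congr rfl fun i _ => Finset.sum_congr rfl fun j _ => ?_
    rw [negKer_comm]
    ring
  rw [step1, Finset.sum_union hPN]
  have inner_split : ∀ i : Fin k,
      ∑ j ∈ P ∪ N, negKer p (x i) (x j) * η i * η j
        = (∑ j ∈ P, negKer p (x i) (x j) * η i * η j)
          + ∑ j ∈ N, negKer p (x i) (x j) * η i * η j :=
    fun i => Finset.sum_union hPN
  simp only [inner_split, Finset.sum_add_distrib]
  rw [hPP, hNN, hPNb, hNPb]
  nlinarith [mul_pos (pow_pos hMpos 2) hgap]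

end Dir2

/-- A metric space has strict `p`-negative type iff it has strict generalized
roundness `p`. -/
theorem strictNegType_iff_strictGenRoundness {X : Type*} [MetricSpace X]
    (p : ℝ) (hp : 0 ≤ p) :
    HasStrictNegType X p ↔ HasStrictGenRoundness X p := by
  constructor
  · exact strict_neg_to_gen
  · intro h
    refine ⟨?_, fun k _ x hx η hsum hne => gen_to_strict_sum h x hx η hsum hne⟩
    intro k _ x hx η hsum
    by_cases hne : η = 0
    · subst hne
      simp
    · exact (gen_to_strict_sum h x hx η hsum hne).le
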